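/- Fix a real k > −1 and let F_k(r) := r·J_k(r)/J_{k+1}(r). For every r > 0 with J_{k+1}(r) ≠ 0, the derivative of F_k at r satisfies F_k'(r) < −r/(k+2). -/

import Mathlib

open Real

/-- Bessel function of the first kind of real order `k`, defined by its power series
(valid for `r > 0`, using real powers). -/
noncomputable def besselJ (k r : ℝ) : ℝ :=
  ∑' m : ℕ, ((-1 : ℝ) ^ m / (m.factorial * Real.Gamma (m + k + 1))) * (r / 2) ^ ((2 * m : ℝ) + k)

noncomputable def bc (a : ℝ) (m : ℕ) : ℝ :=
  (-1 : ℝ) ^ m / (m.factorial * Real.Gamma (m + a + 1))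

noncomputable def fk (a x : ℝ) : ℝ := ∑' m : ℕ, bc a m * x ^ m

lemma gamma_arg_pos (a : ℝ) (ha : -1 < a) (m : ℕ) : 0 < (m : ℝ) + a + 1 := by
  have : (0:ℝ) ≤ m := Nat.cast_nonneg m
  linarith

lemma gamma_pos (a : ℝ) (ha : -1 < a) (m : ℕ) : 0 < Real.Gamma ((m : ℝ) + a + 1) :=
  Real.Gamma_pos_of_pos (gamma_arg_pos a ha m)

lemma abs_bc (a : ℝ) (ha : -1 < a) (m : ℕ) :
    |bc a m| = ((m.factorial : ℝ) * Real.Gamma (m + a + 1))⁻¹ := by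
  have h1 : (0:ℝ) < m.factorial := by positivity
  have h2 := gamma_pos a ha m
  rw [bc, abs_div, abs_pow, abs_neg, abs_one, one_pow, one_div, abs_of_pos (by positivity)]

lemma abs_bc_pos (a : ℝ) (ha : -1 < a) (m : ℕ) : 0 < |bc a m| := by
  rw [abs_bc a ha]
  have h1 : (0:ℝ) < m.factorial := by positivity
  have h2 := gamma_pos a ha m
  positivity

lemma gamma_succ (a : ℝ) (ha : -1 < a) (m : ℕ) :
    Real.Gamma ((↑(m+1):ℝ) + a + 1) = ((m:ℝ)+a+1) * Real.Gamma ((m:ℝ)+a+1) := by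
  have h0 : ((m:ℝ)+a+1) ≠ 0 := ne_of_gt (gamma_arg_pos a ha m)
  have h : ((↑(m+1):ℝ) + a + 1) = ((m:ℝ)+a+1)+1 := by push_cast; ring
  rw [h, Real.Gamma_add_one h0]

lemma abs_bc_succ (a : ℝ) (ha : -1 < a) (m : ℕ) :
    |bc a (m+1)| = |bc a m| / (((m:ℝ)+1) * ((m:ℝ)+a+1)) := by
  rw [abs_bc a ha, abs_bc a ha, gamma_succ a ha m]
  have hf : ((m+1).factorial : ℝ) = ((m:ℝ)+1) * m.factorial := by
    push_cast [Nat.factorial_succ]; ring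
  rw [hf]
  have h1 : (0:ℝ) < m.factorial := by positivity
  have h2 := gamma_pos a ha m
  have h3 := gamma_arg_pos a ha m
  have h4 : (0:ℝ) < (m:ℝ)+1 := by positivity
  field_simp

lemma summable_bound (a : ℝ) (ha : -1 < a) (R : ℝ) (hR : 0 < R) :
    Summable (fun m : ℕ => ((m:ℝ)+1) * |bc a m| * R ^ m) := by
  apply summable_of_ratio_norm_eventually_le (r := 1/2) (by norm_num)
  rw [Filter.eventually_atTop]
  refine ⟨max 1 ⌈6*R⌉₊, fun m hm => ?_⟩
  have hm1 : 1 ≤ m := le_trans (le_max_left _ _) hm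
  have hm1' : (1:ℝ) ≤ m := by exact_mod_cast hm1
  have hm6 : 6*R ≤ (m:ℝ) := by
    have := le_trans (le_max_right 1 ⌈6*R⌉₊) hm
    calc 6*R ≤ ⌈6*R⌉₊ := Nat.le_ceil _
    _ ≤ (m:ℝ) := by exact_mod_cast this
  have h5 : (1:ℝ) ≤ (m:ℝ)+a+1 := by linarith
  have h6 : 6*R*(m:ℝ) ≤ (m:ℝ)*(m:ℝ) := by nlinarith
  have h9 : (2*(m:ℝ)+4)*R ≤ 6*(m:ℝ)*R := by nlinarith [hR.le]
  have h8 : ((m:ℝ)+1)*((m:ℝ)+1) ≤ ((m:ℝ)+1)*(((m:ℝ)+1)*((m:ℝ)+a+1)) := by nlinarith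
  have key : 2 * (((m:ℝ)+1+1) * R) ≤ (((m:ℝ)+1) * (((m:ℝ)+1) * ((m:ℝ)+a+1))) := by
    nlinarith
  have hb := abs_bc_pos a ha m
  have hRp : (0:ℝ) < R ^ m := by positivity
  have harg := gamma_arg_pos a ha m
  have hden : (0:ℝ) < ((m:ℝ)+1) * ((m:ℝ)+a+1) := by positivity
  have e1 : ‖((↑(m+1):ℝ)+1) * |bc a (m+1)| * R ^ (m+1)‖
      = (((m:ℝ)+1+1) * |bc a m| * (R^m * R)) / (((m:ℝ)+1) * ((m:ℝ)+a+1)) := by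
    rw [Real.norm_eq_abs, abs_of_nonneg (by positivity), abs_bc_succ a ha m, pow_succ]
    push_cast; ring
  have e2 : ‖((m:ℝ)+1) * |bc a m| * R ^ m‖ = ((m:ℝ)+1) * |bc a m| * R ^ m := by
    rw [Real.norm_eq_abs, abs_of_nonneg (by positivity)]
  rw [e1, e2, div_le_iff₀ hden]
  nlinarith [mul_le_mul_of_nonneg_left key (mul_nonneg hb.le hRp.le)]
lemma summable_fk (a : ℝ) (ha : -1 < a) (x : ℝ) :
    Summable (fun m : ℕ => bc a m * x ^ m) := by
  have hR : (0:ℝ) < |x| + 1 := by positivity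
  apply Summable.of_norm_bounded (summable_bound a ha (|x|+1) hR)
  intro m
  rw [Real.norm_eq_abs, abs_mul, abs_pow]
  have h1 : |x| ^ m ≤ (|x|+1) ^ m := by
    apply pow_le_pow_left₀ (abs_nonneg x) (by linarith)
  have h2 := abs_bc_pos a ha m
  have h3 : (0:ℝ) ≤ (m:ℝ) := Nat.cast_nonneg m
  nlinarith [mul_le_mul_of_nonneg_left h1 h2.le, mul_pos h2 (pow_pos hR m)]

/-- coefficient identity for differentiation -/
lemma bc_deriv_coeff (a : ℝ) (ha : -1 < a) (m : ℕ) :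
    bc a (m+1) * ((m:ℝ)+1) = - bc (a+1) m := by
  unfold bc
  have h1 : ((↑(m+1):ℝ) + a + 1) = ((m:ℝ) + (a+1) + 1) := by push_cast; ring
  rw [h1]
  have hf : ((m+1).factorial : ℝ) = ((m:ℝ)+1) * m.factorial := by
    push_cast [Nat.factorial_succ]; ring
  rw [hf, pow_succ]
  have h2 := gamma_pos (a+1) (by linarith) m
  have h3 : (0:ℝ) < m.factorial := by positivity
  have h4 : (0:ℝ) < (m:ℝ)+1 := by positivity
  have h5 : ((m:ℝ) + (a+1) + 1) = ((m:ℝ) + (a+1) + 1) := rfl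
  field_simp

lemma hasDerivAt_fk (a : ℝ) (ha : -1 < a) (x : ℝ) :
    HasDerivAt (fk a) (-(fk (a+1) x)) x := by
  set R := |x| + 1 with hRdef
  have hR : (0:ℝ) < R := by positivity
  have hxR : x ∈ Metric.ball (0:ℝ) R := by
    simp [Metric.mem_ball, Real.dist_eq, hRdef]
  have hu := summable_bound a ha R hR
  have hderiv : ∀ (m : ℕ) (y : ℝ), y ∈ Metric.ball (0:ℝ) R →
      HasDerivAt (fun z => bc a m * z ^ m) (bc a m * ((m:ℝ) * y ^ (m-1))) y :=
    fun m y _ => (hasDerivAt_pow m y).const_mul (bc a m)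
  have hbound : ∀ (m : ℕ) (y : ℝ), y ∈ Metric.ball (0:ℝ) R →
      ‖bc a m * ((m:ℝ) * y ^ (m-1))‖ ≤ ((m:ℝ)+1) * |bc a m| * R ^ m := by
    intro m y hy
    rw [Metric.mem_ball, Real.dist_eq, sub_zero] at hy
    rw [Real.norm_eq_abs, abs_mul, abs_mul, abs_pow, Nat.abs_cast]
    match m with
    | 0 => simp
    | n+1 =>
      simp only [Nat.add_sub_cancel]
      have h1 : |y| ^ n ≤ R ^ n := pow_le_pow_left₀ (abs_nonneg y) hy.le n
      have hR1 : (1:ℝ) ≤ R := by rw [hRdef]; have := abs_nonneg x; linarith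
      have h2 : R ^ n ≤ R ^ (n+1) := pow_le_pow_right₀ hR1 (by omega)
      have hb := abs_bc_pos a ha (n+1)
      have nn : (0:ℝ) ≤ (n:ℝ)+1 := by positivity
      have p1 := mul_le_mul_of_nonneg_left h1 nn
      have p2 := mul_le_mul_of_nonneg_left h2 nn
      have p3 : (0:ℝ) ≤ R^(n+1) := pow_nonneg hR.le _
      have step : ((n:ℝ)+1) * |y|^n ≤ (((n:ℝ)+1)+1) * R^(n+1) := by linarith
      push_cast
      nlinarith [mul_le_mul_of_nonneg_left step hb.le]
  have hsum0 : Summable (fun m : ℕ => bc a m * (0:ℝ) ^ m) := summable_fk a ha 0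
  have H := hasDerivAt_tsum_of_isPreconnected hu Metric.isOpen_ball
    (convex_ball (0:ℝ) R).isPreconnected hderiv hbound
    (Metric.mem_ball_self hR) hsum0 hxR
  have hde : (∑' m : ℕ, bc a m * ((m:ℝ) * x ^ (m-1))) = -(fk (a+1) x) := by
    have hs : Summable (fun m : ℕ => bc a m * ((m:ℝ) * x ^ (m-1))) :=
      Summable.of_norm_bounded hu (fun m => hbound m x hxR)
    rw [Summable.tsum_eq_zero_add hs]
    simp only [Nat.cast_zero, zero_mul, mul_zero, zero_add]
    have : ∀ m : ℕ, bc a (m+1) * ((↑(m+1):ℝ) * x ^ (m+1-1)) = -(bc (a+1) m * x ^ m) := by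
      intro m
      have hcc := bc_deriv_coeff a ha m
      simp only [Nat.add_sub_cancel]
      push_cast
      push_cast at hcc
      linear_combination x^m * hcc
    rw [tsum_congr this, tsum_neg, fk]
  rw [← hde]
  exact H
lemma fk_zero (a : ℝ) (ha : -1 < a) : fk a 0 = 1 / Real.Gamma (a+1) := by
  rw [fk, tsum_eq_single 0 (by intro m hm; simp [zero_pow hm])]
  simp [bc]

lemma fk_zero_pos (a : ℝ) (ha : -1 < a) : 0 < fk a 0 := by
  rw [fk_zero a ha]
  have := Real.Gamma_pos_of_pos (show (0:ℝ) < a + 1 by linarith)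
  positivity

/-- coefficient recurrence -/
lemma bc_rec (a : ℝ) (ha : -1 < a) (m : ℕ) :
    bc a (m+1) - (a+1) * bc (a+1) (m+1) = - bc (a+2) m := by
  unfold bc
  have e1 : Real.Gamma ((↑(m+1):ℝ) + a + 1) = ((m:ℝ)+a+1) * Real.Gamma ((m:ℝ)+a+1) :=
    gamma_succ a ha m
  have e2 : ((↑(m+1):ℝ) + (a+1) + 1) = (↑(m+1):ℝ) + a + 1 + 1 := by ring
  have e3 : Real.Gamma ((↑(m+1):ℝ) + (a+1) + 1)
      = ((m:ℝ)+a+2) * (((m:ℝ)+a+1) * Real.Gamma ((m:ℝ)+a+1)) := by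
    rw [e2, Real.Gamma_add_one, e1]
    · push_cast; ring_nf
    · have := gamma_arg_pos a ha (m+1); push_cast at this ⊢; linarith
  have e4 : Real.Gamma ((m:ℝ) + (a+2) + 1)
      = ((m:ℝ)+a+2) * (((m:ℝ)+a+1) * Real.Gamma ((m:ℝ)+a+1)) := by
    have h1 : ((m:ℝ) + (a+2) + 1) = ((m:ℝ)+a+2) + 1 := by ring
    have h2 : ((m:ℝ)+a+2) = ((m:ℝ)+a+1) + 1 := by ring
    have g1 : Real.Gamma (((m:ℝ)+a+1) + 1) = ((m:ℝ)+a+1) * Real.Gamma ((m:ℝ)+a+1) :=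
      Real.Gamma_add_one (by have := gamma_arg_pos a ha m; linarith)
    have g2 : Real.Gamma (((m:ℝ)+a+2) + 1) = ((m:ℝ)+a+2) * Real.Gamma ((m:ℝ)+a+2) :=
      Real.Gamma_add_one (by have := gamma_arg_pos a ha m; linarith)
    have h3 : ((m:ℝ)+a+2) = ((m:ℝ)+a+1) + 1 := by ring
    rw [h1, g2, h3, g1]
  rw [e1, e3, e4]
  have hf : ((m+1).factorial : ℝ) = ((m:ℝ)+1) * m.factorial := by
    push_cast [Nat.factorial_succ]; ring
  rw [hf, pow_succ]
  have h2 := gamma_pos a ha m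
  have h3 : (0:ℝ) < m.factorial := by positivity
  have h4 : (0:ℝ) < (m:ℝ)+1 := by positivity
  have h5 := gamma_arg_pos a ha m
  have h6 : (0:ℝ) < (m:ℝ)+a+2 := by linarith
  field_simp
  ring

/-- the recurrence `f_a = (a+1) f_{a+1} - x f_{a+2}` -/
lemma fk_rec (a : ℝ) (ha : -1 < a) (x : ℝ) :
    fk a x = (a+1) * fk (a+1) x - x * fk (a+2) x := by
  have s1 := summable_fk a ha x
  have s2 := summable_fk (a+1) (by linarith) x
  have s3 := summable_fk (a+2) (by linarith) x
  have s2' : Summable (fun m : ℕ => (a+1) * (bc (a+1) m * x ^ m)) := s2.mul_left _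
  have key : fk a x - (a+1) * fk (a+1) x = - (x * fk (a+2) x) := by
    rw [fk, fk, fk, ← tsum_mul_left, ← Summable.tsum_sub s1 s2']
    have hsub : Summable (fun m : ℕ => bc a m * x ^ m - (a+1) * (bc (a+1) m * x ^ m)) :=
      s1.sub s2'
    rw [Summable.tsum_eq_zero_add hsub]
    have hz : bc a 0 * x ^ 0 - (a+1) * (bc (a+1) 0 * x ^ 0) = 0 := by
      unfold bc
      simp only [pow_zero, mul_one, Nat.factorial_zero, Nat.cast_one, Nat.cast_zero]
      have h1 : ((0:ℝ) + (a+1) + 1) = (a+1) + 1 := by ring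
      have h2 : ((0:ℝ) + a + 1) = a + 1 := by ring
      have g2 : Real.Gamma ((a+1) + 1) = (a+1) * Real.Gamma (a+1) :=
        Real.Gamma_add_one (by linarith)
      rw [h1, h2, g2]
      have h3 := Real.Gamma_pos_of_pos (show (0:ℝ) < a+1 by linarith)
      have h4 : (a+1) * Real.Gamma (a+1) ≠ 0 :=
        ne_of_gt (mul_pos (by linarith) h3)
      field_simp
      rw [div_self (ne_of_gt (by linarith : (0:ℝ) < a+1))]
      ring
    rw [hz, zero_add]
    have hterm : ∀ m : ℕ, bc a (m+1) * x ^ (m+1) - (a+1) * (bc (a+1) (m+1) * x ^ (m+1))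
        = - (x * (bc (a+2) m * x ^ m)) := by
      intro m
      have := bc_rec a ha m
      have hx : x ^ (m+1) = x * x ^ m := by ring
      linear_combination x^(m+1) * this + (bc (a+2) m * (x^(m+1) - x * x^m)) * 1 + 0
    rw [tsum_congr hterm, tsum_neg, ← tsum_mul_left]
  linarith [key]
lemma besselJ_eq (a r : ℝ) (hr : 0 < r) :
    besselJ a r = (r/2) ^ a * fk a ((r/2)^2) := by
  have h2 : (0:ℝ) < r/2 := by linarith
  rw [besselJ, fk, ← tsum_mul_left]
  apply tsum_congr
  intro m
  have e : (r/2) ^ ((2 * m : ℝ) + a) = ((r/2)^2) ^ m * (r/2) ^ a := by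
    rw [Real.rpow_add h2]
    congr 1
    have : ((2 * m : ℝ)) = ((2 * m : ℕ) : ℝ) := by push_cast; ring
    rw [this, Real.rpow_natCast, pow_mul]
  rw [e, ← bc]
  ring
section turan
variable (k : ℝ) (hk : -1 < k)

lemma hasDerivAt_g (t : ℝ) : -1 < k → HasDerivAt (fk (k+1)) (-(fk (k+2) t)) t := by
  intro hk
  have h := hasDerivAt_fk (k+1) (by linarith) t
  rwa [show k+1+1 = k+2 by ring] at h

lemma hasDerivAt_G (t : ℝ) : -1 < k → HasDerivAt (fk (k+2)) (-(fk (k+3) t)) t := by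
  intro hk
  have h := hasDerivAt_fk (k+2) (by linarith) t
  rwa [show k+2+1 = k+3 by ring] at h

/-- sharp Turán-type inequality -/
lemma turan (x : ℝ) (hx : 0 < x) (hk : -1 < k) :
    (k+2) * (fk k x * fk (k+2) x) < (k+1) * (fk (k+1) x)^2 := by
  set g : ℝ → ℝ := fk (k+1) with hgdef
  set G : ℝ → ℝ := fk (k+2) with hGdef
  set L : ℝ → ℝ := fk (k+3) with hLdef
  have hg : ∀ t, HasDerivAt g (-(G t)) t := fun t => hasDerivAt_g k t hk
  have hG : ∀ t, HasDerivAt G (-(L t)) t := fun t => hasDerivAt_G k t hk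
  have hgc : Continuous g := by
    rw [continuous_iff_continuousAt]; exact fun t => (hg t).continuousAt
  have hGc : Continuous G := by
    rw [continuous_iff_continuousAt]; exact fun t => (hG t).continuousAt
  set P : ℝ → ℝ := fun t => (g t)^2 - (k+2) * (g t * G t) + t * (G t)^2 with hPdef
  have hPc : Continuous P := by fun_prop
  set K : ℝ → ℝ := fun t => t ^ (k+2) * P t with hKdef
  have hKc : Continuous K := by
    rw [continuous_iff_continuousAt]
    intro t
    exact (Real.continuousAt_rpow_const t (k+2) (Or.inr (by linarith))).mul hPc.continuousAt
  -- derivative of K on positive reals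
  have hKd : ∀ t : ℝ, 0 < t → HasDerivAt K (t ^ (k+2) * (G t)^2) t := by
    intro t ht
    have hrec : g t = (k+2) * G t - t * L t := by
      have h := fk_rec (k+1) (by linarith) t
      rwa [show k+1+1 = k+2 by ring, show k+1+2 = k+3 by ring] at h
    have hP' : HasDerivAt P (2 * g t * -(G t)
        - (k+2) * (-(G t) * G t + g t * -(L t))
        + ((G t)^2 + t * (2 * G t * -(L t)))) t := by
      have h1 : HasDerivAt (fun t => (g t)^2) (2 * g t * -(G t)) t := by
        simpa using (hg t).fun_pow 2
      have h2 : HasDerivAt (fun t => (k+2) * (g t * G t))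
          ((k+2) * (-(G t) * G t + g t * -(L t))) t :=
        (((hg t).mul (hG t)).const_mul (k+2))
      have h3 : HasDerivAt (fun t => t * (G t)^2) (1 * (G t)^2 + t * (2 * G t * -(L t))) t := by
        have h4 : HasDerivAt (fun t => (G t)^2) (2 * G t * -(L t)) t := by
          simpa using (hG t).fun_pow 2
        exact (hasDerivAt_id t).mul h4
      have := (h1.fun_sub h2).fun_add h3
      simpa [one_mul] using this
    have hrp : HasDerivAt (fun t : ℝ => t ^ (k+2)) ((k+2) * t ^ (k+2-1)) t :=
      Real.hasDerivAt_rpow_const (Or.inl (ne_of_gt ht))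
    have hK' := hrp.fun_mul hP'
    refine hK'.congr_deriv (Eq.symm ?_)
    have hsplit : t ^ (k+2) = t ^ (k+2-1) * t := by
      nth_rewrite 3 [← Real.rpow_one t]
      rw [← Real.rpow_add ht]
      norm_num
    have hS : t * L t = (k+2) * G t - g t := by linarith [hrec]
    rw [hsplit, hPdef]
    linear_combination (t ^ (k+2-1) * (2 * t * G t - (k+2) * g t)) * hS
  -- K is 0 at 0
  have hK0 : K 0 = 0 := by
    simp only [hKdef]
    rw [Real.zero_rpow (by linarith : k+2 ≠ 0), zero_mul]
  -- K is monotone on [0, ∞)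
  have hmono : MonotoneOn K (Set.Ici 0) := by
    apply monotoneOn_of_deriv_nonneg (convex_Ici 0) hKc.continuousOn
    · intro t ht
      rw [interior_Ici] at ht
      exact (hKd t ht).differentiableAt.differentiableWithinAt
    · intro t ht
      rw [interior_Ici] at ht
      rw [(hKd t ht).deriv]
      have := Real.rpow_pos_of_pos ht (k+2)
      positivity
  -- G is positive near 0
  have hG0 : 0 < G 0 := fk_zero_pos (k+2) (by linarith)
  obtain ⟨ε, hε, hball⟩ : ∃ ε > 0, ∀ t : ℝ, |t| < ε → 0 < G t := by
    have hpre : G ⁻¹' (Set.Ioi 0) ∈ nhds (0:ℝ) :=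
      hGc.continuousAt.preimage_mem_nhds (isOpen_Ioi.mem_nhds hG0)
    obtain ⟨ε, hε, hsub⟩ := Metric.mem_nhds_iff.mp hpre
    exact ⟨ε, hε, fun t ht => hsub (by simpa [Real.dist_eq] using ht)⟩
  -- K is strictly positive at x
  have hKpos : 0 < K x := by
    set ε' : ℝ := min (ε/2) x with hε'def
    have hε'pos : 0 < ε' := lt_min (by linarith) hx
    have hstrict : StrictMonoOn K (Set.Icc 0 ε') := by
      apply strictMonoOn_of_deriv_pos (convex_Icc 0 ε') hKc.continuousOn
      intro t ht
      rw [interior_Icc] at ht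
      rw [(hKd t ht.1).deriv]
      have h1 := Real.rpow_pos_of_pos ht.1 (k+2)
      have h2 : 0 < G t := by
        apply hball
        rw [abs_of_pos ht.1]
        calc t < ε' := ht.2
        _ ≤ ε/2 := min_le_left _ _
        _ < ε := by linarith
      positivity
    have h1 : K ε' > 0 := by
      have := hstrict (Set.left_mem_Icc.mpr hε'pos.le)
        (Set.right_mem_Icc.mpr hε'pos.le) hε'pos
      rw [hK0] at this
      exact this
    have h2 : K ε' ≤ K x :=
      hmono (Set.mem_Ici.mpr hε'pos.le) (Set.mem_Ici.mpr hx.le) (min_le_right _ _)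
    linarith
  -- deduce P x > 0
  have hxp := Real.rpow_pos_of_pos hx (k+2)
  have hPpos : 0 < P x := by
    by_contra hle
    push_neg at hle
    have : K x ≤ 0 := mul_nonpos_of_nonneg_of_nonpos hxp.le hle
    linarith
  -- conclude via the recurrence fk k = (k+1) g - x G
  have hreck : fk k x = (k+1) * g x - x * G x := by
    have h := fk_rec k hk x
    rwa [show k+2 = k+2 by ring] at h
  rw [hreck]
  simp only [hPdef] at hPpos
  nlinarith [mul_pos (show (0:ℝ) < k+1 by linarith) hPpos,
    mul_nonneg hx.le (sq_nonneg (G x))]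

end turan

/-- The derivative of `F_k(r) = r J_k(r)/J_{k+1}(r)` satisfies `F_k'(r) < -r/(k+2)`. -/
theorem deriv_besselJ_ratio_lt (k : ℝ) (hk : -1 < k) (r : ℝ) (hr : 0 < r)
    (h : besselJ (k + 1) r ≠ 0) :
    deriv (fun s => s * besselJ k s / besselJ (k + 1) s) r < -r / (k + 2) := by
  set x : ℝ := (r/2)^2 with hxdef
  have hx : 0 < x := by positivity
  -- fk (k+1) is nonzero at x
  have hgx : fk (k+1) x ≠ 0 := by
    intro h0
    apply h
    rw [besselJ_eq (k+1) r hr, ← hxdef, h0, mul_zero]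
  -- the function agrees with a nicer one near r
  have heq : (fun s => s * besselJ k s / besselJ (k + 1) s)
      =ᶠ[nhds r] (fun s => 2 * fk k ((s/2)^2) / fk (k+1) ((s/2)^2)) := by
    filter_upwards [isOpen_Ioi.mem_nhds (Set.mem_Ioi.mpr hr)] with s hs
    have hs0 : (0:ℝ) < s := hs
    have hs2 : (0:ℝ) < s/2 := by linarith
    rw [besselJ_eq k s hs0, besselJ_eq (k+1) s hs0]
    rw [← mul_assoc, mul_div_mul_comm]
    have hpow : s * (s/2) ^ k / (s/2) ^ (k+1) = 2 := by
      rw [Real.rpow_add hs2, Real.rpow_one]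
      have hne : (s/2) ^ k ≠ 0 := ne_of_gt (Real.rpow_pos_of_pos hs2 k)
      field_simp
    rw [hpow, mul_div_assoc]
  rw [heq.deriv_eq]
  -- compute the derivative
  have hι : HasDerivAt (fun s : ℝ => (s/2)^2) (r/2) r := by
    have h1 : HasDerivAt (fun s : ℝ => s/2) (1/2) r := (hasDerivAt_id r).div_const 2
    have h2 := h1.fun_pow 2
    refine h2.congr_deriv (Eq.symm ?_)
    push_cast
    ring
  have hfkk : HasDerivAt (fun s : ℝ => fk k ((s/2)^2)) (-(fk (k+1) x) * (r/2)) r :=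
    by have h1 := (hasDerivAt_fk k hk x).comp r hι; exact h1
  have hfkg : HasDerivAt (fun s : ℝ => fk (k+1) ((s/2)^2)) (-(fk (k+2) x) * (r/2)) r := by
    have h1 := (hasDerivAt_fk (k+1) (by linarith) x).comp r hι
    rwa [show k+1+1 = k+2 by ring] at h1
  have hquot := (hfkk.const_mul 2).fun_div hfkg hgx
  rw [hquot.deriv]
  -- final inequality
  set u := fk k x
  set v := fk (k+1) x
  set w := fk (k+2) x
  have hv2 : 0 < v^2 := by positivity
  have ht := turan k x hx hk
  rw [div_lt_div_iff₀ hv2 (show (0:ℝ) < k+2 by linarith)]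
  have hrt := mul_lt_mul_of_pos_left ht hr
  nlinarith [hrt]
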